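/- For every a ∈ F_q^*, Σ_{w ∈ O^-(2,q)} λ(a·Tr(w)) = −K(λ; a²) + q + 1, where Tr denotes the matrix trace. -/

import Mathlib

open Matrix
open scoped BigOperators Classical

noncomputable section

abbrev Fq (r : ℕ) : Type := GaloisField 3 r
noncomputable instance (r : ℕ) : Fintype (Fq r) := Fintype.ofFinite _

def lam (r : ℕ) (x : Fq r) : ℂ :=
  Complex.exp (2 * Real.pi * Complex.I * ((Algebra.trace (ZMod 3) (Fq r) x).val : ℂ) / 3)

def Kl (r : ℕ) (a : Fq r) : ℂ :=
  ∑ α ∈ Finset.univ.filter (fun α : Fq r => α ≠ 0), lam r (α + a * α⁻¹)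

def deltaEps (r : ℕ) (ε : Fq r) : Matrix (Fin 2) (Fin 2) (Fq r) := !![1, 0; 0, -ε]

def Ominus2 (r : ℕ) (ε : Fq r) : Finset (Matrix (Fin 2) (Fin 2) (Fq r)) :=
  Finset.univ.filter (fun w => IsUnit w.det ∧ wᵀ * deltaEps r ε * w = deltaEps r ε)

/-! ### auxiliary lemmas -/

lemma three_eq_zero (r : ℕ) : (3 : Fq r) = 0 := by
  exact_mod_cast CharP.cast_eq_zero (Fq r) 3

lemma ringChar_Fq (r : ℕ) : ringChar (Fq r) = 3 := ringChar.eq (Fq r) 3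

lemma hF (r : ℕ) : ringChar (Fq r) ≠ 2 := by rw [ringChar_Fq]; decide

lemma one_ne_negone (r : ℕ) : (1 : Fq r) ≠ -1 := by
  intro h
  have h2 : (2 : Fq r) = 0 := by linear_combination h
  have h3 : (3 : Fq r) = 0 := three_eq_zero r
  have : (1 : Fq r) = 0 := by linear_combination h3 - h2
  exact one_ne_zero this

/-! ### the additive character -/

def ee (m : ℕ) : ℂ := Complex.exp (2 * Real.pi * Complex.I * (m : ℂ) / 3)

lemma ee_mod (m : ℕ) : ee m = ee (m % 3) := by
  conv_lhs => rw [← Nat.div_add_mod m 3]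
  unfold ee
  push_cast
  rw [show 2 * ↑Real.pi * Complex.I * (3 * ↑(m / 3) + ↑(m % 3)) / 3
      = ↑(m / 3 : ℕ) * (2 * ↑Real.pi * Complex.I) + 2 * ↑Real.pi * Complex.I * ↑(m % 3) / 3 by ring,
    Complex.exp_add, Complex.exp_nat_mul_two_pi_mul_I]
  ring

lemma ee_add (m n : ℕ) : ee (m + n) = ee m * ee n := by
  unfold ee
  rw [← Complex.exp_add]
  push_cast
  ring_nf

lemma lam_eq (r : ℕ) (x : Fq r) : lam r x = ee ((Algebra.trace (ZMod 3) (Fq r) x).val) := rfl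

lemma lam_add (r : ℕ) (x y : Fq r) : lam r (x + y) = lam r x * lam r y := by
  rw [lam_eq, lam_eq, lam_eq, map_add, ZMod.val_add, ← ee_mod, ee_add]

lemma lam_zero (r : ℕ) : lam r 0 = 1 := by
  rw [lam_eq, map_zero, ZMod.val_zero]
  simp [ee]

def lamChar (r : ℕ) : AddChar (Fq r) ℂ where
  toFun := lam r
  map_zero_eq_one' := lam_zero r
  map_add_eq_mul' := lam_add r

lemma lam_sum (r : ℕ) : ∑ c : Fq r, lam r c = 0 := by
  obtain ⟨x, hx⟩ : ∃ x : Fq r, Algebra.trace (ZMod 3) (Fq r) x = 1 :=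
    Algebra.trace_surjective _ _ 1
  have hne : lamChar r ≠ 1 := by
    intro h
    have : lam r x = 1 := by
      have := congrArg (fun ψ : AddChar (Fq r) ℂ => ψ x) h
      simpa [lamChar] using this
    rw [lam_eq, hx] at this
    have hv : (1 : ZMod 3).val = 1 := rfl
    rw [hv] at this
    unfold ee at this
    rw [Complex.exp_eq_one_iff] at this
    obtain ⟨n, hn⟩ := this
    have hπ : (Real.pi : ℂ) ≠ 0 := by exact_mod_cast Real.pi_ne_zero
    have hI : Complex.I ≠ 0 := Complex.I_ne_zero
    have h2 : (2 : ℂ) * Real.pi * Complex.I ≠ 0 := by simp [hπ, hI]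
    have h4 : (2 : ℂ) * Real.pi * Complex.I * (1/3) = (2 : ℂ) * Real.pi * Complex.I * n := by
      push_cast at hn
      rw [show (2 : ℂ) * Real.pi * Complex.I * (1/3) = 2 * Real.pi * Complex.I * 1 / 3 by ring, hn]
      ring
    have h5 : (1/3 : ℂ) = (n : ℂ) := mul_left_cancel₀ h2 h4
    have h6 : (1 : ℂ) = 3 * (n : ℂ) := by linear_combination 3 * h5
    have h7 : (1 : ℤ) = 3 * n := by exact_mod_cast h6
    omega
  have := AddChar.sum_eq_zero_of_ne_one hne
  simpa [lamChar] using this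

/-! ### counting lemmas -/

lemma sqrt_card (r : ℕ) (u : Fq r) :
    ((Finset.univ.filter fun y : Fq r => y ^ 2 = u).card : ℤ)
      = quadraticChar (Fq r) u + 1 := by
  have := quadraticChar_card_sqrts (hF r) u
  rw [← this]
  congr 1
  rw [Set.toFinset_setOf]

def circ (r : ℕ) (ε : Fq r) : Finset (Fq r × Fq r) :=
  Finset.univ.filter (fun pt => pt.1 ^ 2 - ε * pt.2 ^ 2 = 1)

lemma Acard (r : ℕ) (a c : Fq r) (ha : a ≠ 0) :
    (((Finset.univ.filter (fun α : Fq r => α ≠ 0)).filter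
        (fun α => α + a ^ 2 * α⁻¹ = c)).card : ℤ)
      = quadraticChar (Fq r) (c ^ 2 - a ^ 2) + 1 := by
  rw [← sqrt_card]
  congr 1
  apply Finset.card_nbij' (fun α => α + c) (fun y => y - c)
  · intro α hα
    simp only [Finset.mem_coe, Finset.mem_filter, Finset.mem_univ, true_and] at hα ⊢
    obtain ⟨hα0, heq⟩ := hα
    have hmul : α ^ 2 + a ^ 2 = c * α := by
      field_simp at heq
      linear_combination heq
    linear_combination hmul + c * α * three_eq_zero r
  · intro y hy
    simp only [Finset.mem_coe, Finset.mem_filter, Finset.mem_univ, true_and] at hy ⊢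
    set α := y - c with hα
    have h' : (α + c) ^ 2 = c ^ 2 - a ^ 2 := by rw [hα]; ring_nf; linear_combination hy
    have hα0 : α ≠ 0 := by
      intro h0
      rw [h0] at h'
      have : a ^ 2 = 0 := by linear_combination h'
      exact ha (pow_eq_zero_iff (by norm_num)|>.mp this)
    refine ⟨hα0, ?_⟩
    field_simp
    linear_combination h' - c * α * three_eq_zero r
  · intro α _; ring
  · intro y _; ring

lemma Bcard (r : ℕ) (ε a c : Fq r) (hε0 : ε ≠ 0) (ha : a ≠ 0) :
    (((circ r ε).filter (fun pt => a * (pt.1 + pt.1) = c)).card : ℤ)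
      = quadraticChar (Fq r) ((c ^ 2 - a ^ 2) * (a ^ 2 * ε)⁻¹) + 1 := by
  have haa : a + a ≠ 0 := by
    have : a + a = -a := by linear_combination a * three_eq_zero r
    rw [this]; exact neg_ne_zero.mpr ha
  have haa' : a + a = -a := by linear_combination a * three_eq_zero r
  have hinv : a * a⁻¹ = 1 := mul_inv_cancel₀ ha
  rw [← sqrt_card]
  congr 1
  apply Finset.card_nbij' (fun pt => pt.2) (fun y => (c * (a + a)⁻¹, y))
  · intro pt hpt
    simp only [circ, Finset.filter_filter, Finset.mem_coe, Finset.mem_filter, Finset.mem_univ, true_and] at hpt ⊢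
    obtain ⟨hcirc, hx⟩ := hpt
    have key : pt.2 ^ 2 * (a ^ 2 * ε) = c ^ 2 - a ^ 2 := by
      linear_combination (-a^2) * hcirc + (a * (pt.1 + pt.1) + c) * hx
        - a ^ 2 * pt.1 ^ 2 * three_eq_zero r
    field_simp
    linear_combination key
  · intro y hy
    simp only [circ, Finset.filter_filter, Finset.mem_coe, Finset.mem_filter, Finset.mem_univ, true_and] at hy ⊢
    constructor
    · have key : y ^ 2 * (a ^ 2 * ε) = c ^ 2 - a ^ 2 := by
        field_simp at hy
        linear_combination hy
      rw [haa']
      linear_combination -(a⁻¹) ^ 2 * key + (a * a⁻¹ + 1) * (1 + ε * y ^ 2) * hinv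
    · rw [haa']
      linear_combination (-2 * c) * hinv - c * three_eq_zero r
  · intro pt hpt
    simp only [circ, Finset.filter_filter, Finset.mem_coe, Finset.mem_filter, Finset.mem_univ, true_and] at hpt
    obtain ⟨hcirc, hx⟩ := hpt
    have : pt.1 = c * (a + a)⁻¹ := by
      rw [haa']
      linear_combination (-a⁻¹) * hx + 2 * pt.1 * hinv + pt.1 * three_eq_zero r
    exact Prod.ext this.symm rfl
  · intro y _; rfl

lemma chi_flip (r : ℕ) (ε a c : Fq r) (hε : ¬ IsSquare ε) (hε0 : ε ≠ 0) (ha : a ≠ 0) :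
    quadraticChar (Fq r) ((c ^ 2 - a ^ 2) * (a ^ 2 * ε)⁻¹)
      = - quadraticChar (Fq r) (c ^ 2 - a ^ 2) := by
  have hne : (a ^ 2 * ε) ≠ 0 := mul_ne_zero (pow_ne_zero _ ha) hε0
  have hmul : quadraticChar (Fq r) (a ^ 2 * ε) = -1 := by
    rw [_root_.map_mul, quadraticChar_sq_one' ha, one_mul]
    exact quadraticChar_neg_one_iff_not_isSquare.mpr hε
  have hd : quadraticChar (Fq r) (c ^ 2 - a ^ 2)
      = quadraticChar (Fq r) ((c ^ 2 - a ^ 2) * (a ^ 2 * ε)⁻¹) * quadraticChar (Fq r) (a ^ 2 * ε) := by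
    rw [← _root_.map_mul]
    congr 1
    field_simp
  rw [hd, hmul]
  ring

/-- the key counting identity, in ℕ -/
lemma key_count (r : ℕ) (ε a c : Fq r) (hε : ¬ IsSquare ε) (hε0 : ε ≠ 0) (ha : a ≠ 0) :
    ((Finset.univ.filter (fun α : Fq r => α ≠ 0)).filter
        (fun α => α + a ^ 2 * α⁻¹ = c)).card
      + ((circ r ε).filter (fun pt => a * (pt.1 + pt.1) = c)).card = 2 := by
  have h1 := Acard r a c ha
  have h2 := Bcard r ε a c hε0 ha
  rw [chi_flip r ε a c hε hε0 ha] at h2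
  have : (((Finset.univ.filter (fun α : Fq r => α ≠ 0)).filter
        (fun α => α + a ^ 2 * α⁻¹ = c)).card : ℤ)
      + ((circ r ε).filter (fun pt => a * (pt.1 + pt.1) = c)).card = 2 := by
    rw [h1, h2]; ring
  exact_mod_cast this

/-! ### matrix structure -/

def rot (r : ℕ) (ε : Fq r) (pt : Fq r × Fq r) : Matrix (Fin 2) (Fin 2) (Fq r) :=
  !![pt.1, ε * pt.2; pt.2, pt.1]

def ref (r : ℕ) (ε : Fq r) (pt : Fq r × Fq r) : Matrix (Fin 2) (Fin 2) (Fq r) :=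
  !![pt.1, -(ε * pt.2); pt.2, -pt.1]

lemma Ominus2_eq (r : ℕ) (ε : Fq r) (hε0 : ε ≠ 0) :
    Ominus2 r ε = (circ r ε).image (rot r ε) ∪ (circ r ε).image (ref r ε) := by
  ext w
  simp only [Ominus2, circ, Finset.mem_union, Finset.mem_image, Finset.mem_filter,
    Finset.mem_univ, true_and]
  constructor
  · rintro ⟨hdet, heq⟩
    set p := w 0 0 with hp
    set q := w 0 1 with hq
    set t := w 1 0 with ht
    set s := w 1 1 with hs
    have hw : w = !![p, q; t, s] := Matrix.eta_fin_two w
    rw [hw] at heq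
    have htr : (!![p, q; t, s])ᵀ = !![p, t; q, s] := by
      ext i j; fin_cases i <;> fin_cases j <;> simp
    rw [htr, deltaEps, Matrix.mul_fin_two, Matrix.mul_fin_two] at heq
    have e00 := congrFun (congrFun heq 0) 0
    have e01 := congrFun (congrFun heq 0) 1
    have e11 := congrFun (congrFun heq 1) 1
    simp at e00 e01 e11
    -- e00 : p * p + -(t * ε * t) = 1
    -- e01 : p * q + -(t * ε * s) = 0
    -- e11 : q * q + -(s * ε * s) = -ε
    have hd2 : ε * (p * s - q * t) ^ 2 = ε := by
      linear_combination (p * q - t * ε * s) * e01 - (q * q - ε * s * s) * e00 - e11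
    have hd2' : (p * s - q * t) ^ 2 = 1 := by
      have := mul_left_cancel₀ hε0 (show ε * (p * s - q * t) ^ 2 = ε * 1 by
        rw [mul_one]; exact hd2)
      exact this
    have hcases : p * s - q * t = 1 ∨ p * s - q * t = -1 := by
      have hfac : (p * s - q * t - 1) * (p * s - q * t + 1) = 0 := by linear_combination hd2'
      rcases mul_eq_zero.mp hfac with h | h
      · left; linear_combination h
      · right; linear_combination h
    rcases hcases with hd | hd
    · left
      refine ⟨(p, t), ?_, ?_⟩
      · simpa using by linear_combination e00
      · have hs2 : s = p := by linear_combination p * hd - s * e00 + t * e01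
        have hq2 : q = ε * t := by
          by_cases hto : t = 0
          · have hq0 : q ^ 2 = ε ^ 2 * t ^ 2 := by
              linear_combination e11 + ε * e00 + ε * (s + p) * hs2
            rw [hto, mul_zero]
            rw [hto] at hq0
            simpa using pow_eq_zero_iff (n := 2) (by norm_num) |>.mp (by simpa using hq0)
          · have hqt : q * t = (ε * t) * t := by
              linear_combination -hd + p * hs2 + e00
            exact mul_right_cancel₀ hto hqt
        rw [hw]
        simp only [rot]
        rw [hq2, hs2]
    · right
      refine ⟨(p, t), ?_, ?_⟩
      · simpa using by linear_combination e00
      · have hs2 : s = -p := by linear_combination p * hd - s * e00 + t * e01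
        have hq2 : q = -(ε * t) := by
          by_cases hto : t = 0
          · have hq0 : q ^ 2 = ε ^ 2 * t ^ 2 := by
              linear_combination e11 + ε * e00 + ε * (s - p) * hs2
            rw [hto, mul_zero, neg_zero]
            rw [hto] at hq0
            simpa using pow_eq_zero_iff (n := 2) (by norm_num) |>.mp (by simpa using hq0)
          · have hqt : q * t = (-(ε * t)) * t := by
              linear_combination -hd + p * hs2 - e00
            exact mul_right_cancel₀ hto hqt
        rw [hw]
        simp only [ref]
        rw [hq2, hs2]
  · rintro (⟨pt, hcirc, rfl⟩ | ⟨pt, hcirc, rfl⟩)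
    · constructor
      · rw [rot, Matrix.det_fin_two_of]
        have : pt.1 * pt.1 - ε * pt.2 * pt.2 = 1 := by linear_combination hcirc
        rw [this]; exact isUnit_one
      · have htr : (rot r ε pt)ᵀ = !![pt.1, pt.2; ε * pt.2, pt.1] := by
          rw [rot]; ext i j; fin_cases i <;> fin_cases j <;> simp
        rw [htr, rot, deltaEps, Matrix.mul_fin_two, Matrix.mul_fin_two]
        ext i j
        fin_cases i <;> fin_cases j <;> simp <;> [(linear_combination hcirc); ring; ring; (linear_combination -ε * hcirc)]
    · constructor
      · rw [ref, Matrix.det_fin_two_of]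
        have hdd : pt.1 * -pt.1 - -(ε * pt.2) * pt.2 = -1 := by linear_combination -hcirc
        rw [hdd]
        exact isUnit_one.neg
      · have htr : (ref r ε pt)ᵀ = !![pt.1, pt.2; -(ε * pt.2), -pt.1] := by
          rw [ref]; ext i j; fin_cases i <;> fin_cases j <;> simp
        rw [htr, ref, deltaEps, Matrix.mul_fin_two, Matrix.mul_fin_two]
        ext i j
        fin_cases i <;> fin_cases j <;> simp <;> [(linear_combination hcirc); ring; ring; (linear_combination -ε * hcirc)]

/-! ### sums and cards -/

lemma card_filter_ne (r : ℕ) :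
    (Finset.univ.filter (fun α : Fq r => α ≠ 0)).card = Fintype.card (Fq r) - 1 := by
  rw [Finset.filter_ne', Finset.card_erase_of_mem (Finset.mem_univ 0), Finset.card_univ]

lemma circ_card (r : ℕ) (ε a : Fq r) (hε : ¬ IsSquare ε) (hε0 : ε ≠ 0) (ha : a ≠ 0) :
    (circ r ε).card = Fintype.card (Fq r) + 1 := by
  have hA1 := Finset.sum_fiberwise (Finset.univ.filter (fun α : Fq r => α ≠ 0))
    (fun α : Fq r => α + a ^ 2 * α⁻¹) (fun _ => (1 : ℕ))
  have hB1 := Finset.sum_fiberwise (circ r ε)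
    (fun pt : Fq r × Fq r => a * (pt.1 + pt.1)) (fun _ => (1 : ℕ))
  simp only [Finset.sum_const, smul_eq_mul, mul_one] at hA1 hB1
  have hsum : ∑ c : Fq r,
      (((Finset.univ.filter (fun α : Fq r => α ≠ 0)).filter
        (fun α => α + a ^ 2 * α⁻¹ = c)).card
      + ((circ r ε).filter (fun pt => a * (pt.1 + pt.1) = c)).card)
      = 2 * Fintype.card (Fq r) := by
    rw [Finset.sum_congr rfl (fun c _ => key_count r ε a c hε hε0 ha)]
    simp [Finset.card_univ, mul_comm]
  rw [Finset.sum_add_distrib, hA1, hB1, card_filter_ne] at hsum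
  have hq : 1 ≤ Fintype.card (Fq r) := Fintype.card_pos
  omega

lemma KS (r : ℕ) (ε a : Fq r) (hε : ¬ IsSquare ε) (hε0 : ε ≠ 0) (ha : a ≠ 0) :
    Kl r (a ^ 2) + ∑ pt ∈ circ r ε, lam r (a * (pt.1 + pt.1)) = 0 := by
  have hK : Kl r (a ^ 2) = ∑ c : Fq r,
      ((((Finset.univ.filter (fun α : Fq r => α ≠ 0)).filter
        (fun α => α + a ^ 2 * α⁻¹ = c)).card : ℂ) * lam r c) := by
    rw [Kl]
    rw [← Finset.sum_fiberwise' (Finset.univ.filter (fun α : Fq r => α ≠ 0))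
      (fun α : Fq r => α + a ^ 2 * α⁻¹) (lam r)]
    exact Finset.sum_congr rfl fun c _ => by rw [Finset.sum_const, nsmul_eq_mul]
  have hS : ∑ pt ∈ circ r ε, lam r (a * (pt.1 + pt.1)) = ∑ c : Fq r,
      ((((circ r ε).filter (fun pt => a * (pt.1 + pt.1) = c)).card : ℂ) * lam r c) := by
    rw [← Finset.sum_fiberwise' (circ r ε)
      (fun pt : Fq r × Fq r => a * (pt.1 + pt.1)) (lam r)]
    exact Finset.sum_congr rfl fun c _ => by rw [Finset.sum_const, nsmul_eq_mul]
  rw [hK, hS, ← Finset.sum_add_distrib]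
  have : ∀ c : Fq r, ((((Finset.univ.filter (fun α : Fq r => α ≠ 0)).filter
        (fun α => α + a ^ 2 * α⁻¹ = c)).card : ℂ) * lam r c)
      + ((((circ r ε).filter (fun pt => a * (pt.1 + pt.1) = c)).card : ℂ) * lam r c)
      = 2 * lam r c := by
    intro c
    have := key_count r ε a c hε hε0 ha
    have hcast : (((Finset.univ.filter (fun α : Fq r => α ≠ 0)).filter
        (fun α => α + a ^ 2 * α⁻¹ = c)).card : ℂ)
      + (((circ r ε).filter (fun pt => a * (pt.1 + pt.1) = c)).card : ℂ) = 2 := by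
      exact_mod_cast congrArg (Nat.cast : ℕ → ℂ) this
    linear_combination lam r c * hcast
  rw [Finset.sum_congr rfl (fun c _ => this c), ← Finset.mul_sum, lam_sum r, mul_zero]

theorem stmt4 (r : ℕ) (hr : 0 < r) (ε : Fq r) (hε : ¬ IsSquare ε)
    (a : Fq r) (ha : a ≠ 0) :
    ∑ w ∈ Ominus2 r ε, lam r (a * w.trace) = -Kl r (a ^ 2) + (3 : ℂ) ^ r + 1 := by
  have hε0 : ε ≠ 0 := fun h => hε (h ▸ ⟨0, by ring⟩)
  have hdisj : Disjoint ((circ r ε).image (rot r ε)) ((circ r ε).image (ref r ε)) := by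
    rw [Finset.disjoint_left]
    rintro w hw1 hw2
    obtain ⟨x, hx, rfl⟩ := Finset.mem_image.mp hw1
    obtain ⟨y, hy, hxy⟩ := Finset.mem_image.mp hw2
    simp only [circ, Finset.mem_filter, Finset.mem_univ, true_and] at hx hy
    have h1 : (rot r ε x).det = 1 := by
      rw [rot, Matrix.det_fin_two_of]; linear_combination hx
    have h2 : (rot r ε x).det = -1 := by
      rw [← hxy, ref, Matrix.det_fin_two_of]; linear_combination -hy
    exact one_ne_negone r (h1 ▸ h2)
  have hinj_rot : ∀ x ∈ circ r ε, ∀ y ∈ circ r ε, rot r ε x = rot r ε y → x = y := by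
    intro x _ y _ h
    have h1 := congrFun (congrFun h 0) 0
    have h2 := congrFun (congrFun h 1) 0
    simp [rot] at h1 h2
    exact Prod.ext h1 h2
  have hinj_ref : ∀ x ∈ circ r ε, ∀ y ∈ circ r ε, ref r ε x = ref r ε y → x = y := by
    intro x _ y _ h
    have h1 := congrFun (congrFun h 0) 0
    have h2 := congrFun (congrFun h 1) 0
    simp [ref] at h1 h2
    exact Prod.ext h1 h2
  rw [Ominus2_eq r ε hε0, Finset.sum_union hdisj, Finset.sum_image hinj_rot,
    Finset.sum_image hinj_ref]
  have htr_rot : ∀ pt : Fq r × Fq r, (rot r ε pt).trace = pt.1 + pt.1 := by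
    intro pt; rw [rot, Matrix.trace_fin_two_of]
  have htr_ref : ∀ pt : Fq r × Fq r, lam r (a * (ref r ε pt).trace) = 1 := by
    intro pt
    rw [ref, Matrix.trace_fin_two_of, add_neg_cancel, mul_zero, lam_zero]
  simp only [htr_rot]
  rw [Finset.sum_congr rfl (fun pt _ => htr_ref pt), Finset.sum_const, nsmul_eq_mul, mul_one]
  have hKS := KS r ε a hε hε0 ha
  have hcc := circ_card r ε a hε hε0 ha
  have hcard : Fintype.card (Fq r) = 3 ^ r := by
    rw [← Nat.card_eq_fintype_card]; exact GaloisField.card 3 r hr.ne'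
  rw [hcc, hcard]
  push_cast
  linear_combination hKS
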